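/- Let w be a C'-adic word with directive sequence (τ_n) such that τ_0 ∈ {c11, c22}, let w^{(1)} be its shifted word, let u be a nonempty bispecial factor of w and let v be the bispecial antecedent of u under τ_0. Then E(u,w) = E(v,w^{(1)}). -/

import Mathlib

/-- Letters `0, 1, 2` stand for the letters `1, 2, 3` of the paper. -/
abbrev Letter := Fin 3

/-- A finite word over the alphabet `{1,2,3}`. -/
abbrev Word := List Letter

/-- Apply a substitution (given by its values on letters) to a finite word. -/
def applySub (σ : Letter → Word) (w : Word) : Word := (w.map σ).flatten

/-- `c11 = c₁² : 1 ↦ 1, 2 ↦ 12, 3 ↦ 13`. -/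
def c11 : Letter → Word := ![[0], [0, 1], [0, 2]]

/-- `c22 = c₂² : 1 ↦ 13, 2 ↦ 23, 3 ↦ 3`. -/
def c22 : Letter → Word := ![[0, 2], [1, 2], [2]]

/-- `c122 = c₁c₂² : 1 ↦ 12, 2 ↦ 132, 3 ↦ 2`. -/
def c122 : Letter → Word := ![[0, 1], [0, 2, 1], [1]]

/-- `c211 = c₂c₁² : 1 ↦ 2, 2 ↦ 213, 3 ↦ 23`. -/
def c211 : Letter → Word := ![[1], [1, 0, 2], [1, 2]]

/-- `c121 = c₁c₂c₁ : 1 ↦ 13, 2 ↦ 132, 3 ↦ 12`. -/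
def c121 : Letter → Word := ![[0, 2], [0, 2, 1], [0, 1]]

/-- `c212 = c₂c₁c₂ : 1 ↦ 23, 2 ↦ 213, 3 ↦ 13`. -/
def c212 : Letter → Word := ![[1, 2], [1, 0, 2], [0, 2]]

/-- The set of substitutions `C'`. -/
def Cprime : Set (Letter → Word) := {c11, c22, c122, c211, c121, c212}

/-- `comps τ r k` is the composition `τ_r ∘ τ_{r+1} ∘ ⋯ ∘ τ_{r+k-1}` acting on words. -/
def comps (τ : ℕ → Letter → Word) : ℕ → ℕ → Word → Word
  | _, 0 => id
  | r, k + 1 => applySub (τ r) ∘ comps τ (r + 1) k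

/-- `u` is a prefix of the infinite word `w`. -/
def IsPrefixOfInf (u : Word) (w : ℕ → Letter) : Prop :=
  ∀ (k : ℕ) (hk : k < u.length), u[k] = w k

/-- `u` is a factor of the infinite word `w`. -/
def FactorOf (u : Word) (w : ℕ → Letter) : Prop :=
  ∃ i : ℕ, u = List.ofFn (fun j : Fin u.length => w (i + j))

/-- The extension set `E(u,w) = {(a,b) : a·u·b is a factor of w}`. -/
def ExtSet (u : Word) (w : ℕ → Letter) : Set (Letter × Letter) :=
  {p | FactorOf ([p.1] ++ u ++ [p.2]) w}

/-- A factor `u` of `w` is bispecial if both projections of `E(u,w)` have at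
least two elements. -/
def Bispecial (u : Word) (w : ℕ → Letter) : Prop :=
  1 < (Prod.fst '' ExtSet u w).ncard ∧ 1 < (Prod.snd '' ExtSet u w).ncard

lemma applySub_nil (σ) : applySub σ [] = [] := rfl
lemma applySub_cons (σ) (x : Letter) (t : Word) :
    applySub σ (x :: t) = σ x ++ applySub σ t := by simp [applySub]
lemma applySub_append (σ) (s t : Word) :
    applySub σ (s ++ t) = applySub σ s ++ applySub σ t := by simp [applySub]

lemma factorOf_iff (z : Word) (w : ℕ → Letter) :
    FactorOf z w ↔ ∃ i, ∀ j (hj : j < z.length), z[j] = w (i + j) := by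
  constructor
  · rintro ⟨i, hi⟩
    refine ⟨i, fun j hj => ?_⟩
    have : z[j] = (List.ofFn fun j : Fin z.length => w (i + j))[j]'(by simpa using hj) := by
      congr 1
    rw [this, List.getElem_ofFn]
  · rintro ⟨i, hi⟩
    refine ⟨i, ?_⟩
    apply List.ext_getElem (by simp)
    intro j h1 h2
    simpa using hi j h1

def pref (w1 : ℕ → Letter) (n : ℕ) : Word := List.ofFn fun i : Fin n => w1 i
def phi (σ : Letter → Word) (w1 : ℕ → Letter) (n : ℕ) : ℕ :=
  (applySub σ (pref w1 n)).length

lemma pref_succ (w1 : ℕ → Letter) (n : ℕ) :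
    pref w1 (n+1) = pref w1 n ++ [w1 n] := by
  rw [pref, List.ofFn_succ']
  simp [pref, List.concat_eq_append]

section
variable (σ : Letter → Word) (w w1 : ℕ → Letter)

lemma phi_zero : phi σ w1 0 = 0 := rfl

lemma phi_succ (n : ℕ) : phi σ w1 (n+1) = phi σ w1 n + (σ (w1 n)).length := by
  simp [phi, pref_succ, applySub_append, applySub_cons, applySub_nil]

lemma block (hshift : ∀ n, IsPrefixOfInf (applySub σ (pref w1 n)) w)
    (k j : ℕ) (hj : j < (σ (w1 k)).length) :
    w (phi σ w1 k + j) = (σ (w1 k))[j] := by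
  have e : applySub σ (pref w1 (k+1)) = applySub σ (pref w1 k) ++ σ (w1 k) := by
    rw [pref_succ, applySub_append]
    simp [applySub_cons, applySub_nil]
  have hphik : phi σ w1 k = (applySub σ (pref w1 k)).length := rfl
  have hlen : (applySub σ (pref w1 (k+1))).length = phi σ w1 k + (σ (w1 k)).length := by
    rw [e, List.length_append, hphik]
  have hk : phi σ w1 k + j < (applySub σ (pref w1 (k+1))).length := by omega
  rw [← hshift (k+1) (phi σ w1 k + j) hk]
  have e2 : (applySub σ (pref w1 (k+1)))[phi σ w1 k + j] =
      (applySub σ (pref w1 k) ++ σ (w1 k))[phi σ w1 k + j]'(by rw [← e]; exact hk) := by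
    congr 1
  rw [e2, List.getElem_append_right (by omega)]
  congr 1
  omega

lemma phi_cover (hne : ∀ x : Letter, 1 ≤ (σ x).length) (p : ℕ) :
    ∃ k j, p = phi σ w1 k + j ∧ j < (σ (w1 k)).length := by
  induction p with
  | zero => exact ⟨0, 0, by simp [phi_zero], hne _⟩
  | succ p ih =>
    obtain ⟨k, j, hp, hj⟩ := ih
    by_cases h : j + 1 < (σ (w1 k)).length
    · exact ⟨k, j+1, by omega, h⟩
    · refine ⟨k+1, 0, ?_, hne _⟩
      rw [phi_succ]; omega

lemma phi_ge (hne : ∀ x : Letter, 1 ≤ (σ x).length) (k : ℕ) : k ≤ phi σ w1 k := by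
  induction k with
  | zero => simp
  | succ k ih => rw [phi_succ]; have := hne (w1 k); omega

lemma forward (hshift : ∀ n, IsPrefixOfInf (applySub σ (pref w1 n)) w) :
    ∀ (v : Word) (k : ℕ), (∀ j (hj : j < v.length), w1 (k + j) = v[j]) →
    (∀ j (hj : j < (applySub σ v).length), w (phi σ w1 k + j) = (applySub σ v)[j])
    ∧ phi σ w1 (k + v.length) = phi σ w1 k + (applySub σ v).length := by
  intro v
  induction v with
  | nil =>
    intro k _
    constructor
    · intro j hj; simp [applySub_nil] at hj
    · simp [applySub_nil]
  | cons x t ih =>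
    intro k hk
    have hx : w1 k = x := by exact hk 0 (by simp)
    have ht : ∀ j (hj : j < t.length), w1 ((k+1) + j) = t[j] := by
      intro j hj
      rw [show (k+1)+j = k + (j+1) by omega]
      exact hk (j+1) (by simp; omega)
    obtain ⟨ht1, ht2⟩ := ih (k+1) ht
    have hb : ∀ j (hj : j < (σ x).length), w (phi σ w1 k + j) = (σ x)[j] := by
      intro j hj
      have := block σ w w1 hshift k j (by rw [hx]; exact hj)
      simpa [hx] using this
    have hps : phi σ w1 (k+1) = phi σ w1 k + (σ x).length := by rw [phi_succ, hx]
    constructor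
    · intro j hj
      simp only [applySub_cons] at hj ⊢
      rcases Nat.lt_or_ge j (σ x).length with h | h
      · rw [List.getElem_append_left h]
        exact hb j h
      · rw [List.getElem_append_right h]
        have hj' : j - (σ x).length < (applySub σ t).length := by
          rw [List.length_append] at hj; omega
        have := ht1 (j - (σ x).length) hj'
        rw [show phi σ w1 k + j = phi σ w1 (k+1) + (j - (σ x).length) by omega] at *
        exact this
    · rw [List.length_cons, show k + (t.length + 1) = (k+1) + t.length by omega, ht2,
        hps, applySub_cons, List.length_append]
      omega

end

lemma occ_split (a b : Letter) (u : Word) (w : ℕ → Letter) :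
    FactorOf ([a] ++ u ++ [b]) w ↔ ∃ i, w i = a ∧
      (∀ j (hj : j < u.length), u[j] = w (i+1+j)) ∧ w (i + 1 + u.length) = b := by
  rw [factorOf_iff]
  constructor
  · rintro ⟨i, hi⟩
    refine ⟨i, ?_, ?_, ?_⟩
    · have := hi 0 (by simp)
      simpa using this.symm
    · intro j hj
      have h1 : j + 1 < ([a] ++ u ++ [b]).length := by simp; omega
      have := hi (j+1) h1
      rw [show i + (j+1) = i+1+j by omega] at this
      rw [← this]
      rw [List.getElem_append_left (by simp; omega)]
      rw [List.getElem_append_right (by simp)]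
      simp
    · have h1 : u.length + 1 < ([a] ++ u ++ [b]).length := by simp
      have := hi (u.length + 1) h1
      rw [show i + (u.length + 1) = i+1+u.length by omega] at this
      rw [← this]
      rw [List.getElem_append_right (by simp)]
      simp
  · rintro ⟨i, ha, hu, hb⟩
    refine ⟨i, fun j hj => ?_⟩
    simp only [List.length_append, List.length_singleton] at hj
    rcases Nat.eq_or_lt_of_le (Nat.succ_le_of_lt hj) with he | hlt
    · -- j = 1 + u.length + 1 - 1, i.e. j = u.length + 1 : the letter b
      have hj' : j = u.length + 1 := by omega
      subst hj'
      rw [List.getElem_append_right (by simp)]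
      simpa [show i + (u.length+1) = i+1+u.length by omega] using hb.symm
    · rcases Nat.eq_zero_or_pos j with h0 | hpos
      · subst h0
        simpa using ha.symm
      · -- 1 ≤ j ≤ u.length : inside u
        have hju : j - 1 < u.length := by omega
        rw [List.getElem_append_left (by simp; omega)]
        rw [List.getElem_append_right (by simp; omega)]
        have := hu (j-1) hju
        rw [show i + 1 + (j-1) = i + j by omega] at this
        simpa using this

lemma letter_cases (x : Letter) : x = 0 ∨ x = 1 ∨ x = 2 := by fin_cases x <;> decide

lemma c11_len_pos : ∀ x : Letter, 1 ≤ (c11 x).length := by decide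

lemma c11_head (x : Letter) (h : 0 < (c11 x).length) : (c11 x)[0] = 0 := by
  fin_cases x <;> rfl

lemma c11_head0 (t : Word) (h : 0 < (applySub c11 t ++ [0]).length) :
    (applySub c11 t ++ [0])[0] = 0 := by
  cases t with
  | nil => rfl
  | cons x t =>
    have h1 : 0 < (c11 x).length := c11_len_pos x
    simp only [applySub_cons, List.append_assoc]
    rw [List.getElem_append_left h1]
    exact c11_head x h1

section
variable (w w1 : ℕ → Letter)
  (hshift : ∀ n, IsPrefixOfInf (applySub c11 (pref w1 n)) w)

include hshift

lemma c11_A1 (k : ℕ) : w (phi c11 w1 k + 1) = w1 k := by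
  rcases letter_cases (w1 k) with h|h|h
  · have hp : phi c11 w1 (k+1) = phi c11 w1 k + 1 := by
      rw [phi_succ, h]; rfl
    have hb := block c11 w w1 hshift (k+1) 0 (c11_len_pos _)
    rw [c11_head _ (c11_len_pos _)] at hb
    rw [h, ← hp]
    simpa using hb
  · have hb := block c11 w w1 hshift k 1 (by rw [h]; decide)
    have e : (c11 (w1 k))[1]'(by rw [h]; decide) = w1 k := by
      simp only [h]; rfl
    rw [hb, e]
  · have hb := block c11 w w1 hshift k 1 (by rw [h]; decide)
    have e : (c11 (w1 k))[1]'(by rw [h]; decide) = w1 k := by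
      simp only [h]; rfl
    rw [hb, e]

lemma c11_A2 (k : ℕ) : w (phi c11 w1 (k+1) - 1) = w1 k := by
  have hp : phi c11 w1 (k+1) = phi c11 w1 k + (c11 (w1 k)).length := phi_succ ..
  have hb := block c11 w w1 hshift k ((c11 (w1 k)).length - 1)
    (by have := c11_len_pos (w1 k); omega)
  have e1 : phi c11 w1 (k+1) - 1 = phi c11 w1 k + ((c11 (w1 k)).length - 1) := by
    have := c11_len_pos (w1 k); omega
  rw [e1, hb]
  rcases letter_cases (w1 k) with h|h|h <;> · simp only [h]; rfl

lemma c11_sync (p : ℕ) (h : w p = 0) : ∃ k, p = phi c11 w1 k := by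
  obtain ⟨k, j, hp, hj⟩ := phi_cover c11 w1 c11_len_pos p
  rcases Nat.eq_zero_or_pos j with h0 | hpos
  · exact ⟨k, by omega⟩
  · exfalso
    have hne : ∀ (x : Letter) (j : Fin (c11 x).length), 1 ≤ (j:ℕ) →
        (c11 x)[(j:ℕ)]'j.isLt ≠ 0 := by decide
    have hb := block c11 w w1 hshift k j hj
    rw [← hp, h] at hb
    exact hne (w1 k) ⟨j, hj⟩ hpos hb.symm

lemma c11_decode : ∀ (v : Word) (k : ℕ),
    (∀ j (hj : j < (applySub c11 v ++ [0]).length),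
      w (phi c11 w1 k + j) = (applySub c11 v ++ [0])[j]) →
    (∀ j (hj : j < v.length), w1 (k + j) = v[j]) ∧
    phi c11 w1 (k + v.length) = phi c11 w1 k + (applySub c11 v).length := by
  intro v
  induction v with
  | nil =>
    intro k _
    exact ⟨by intro j hj; simp at hj, by simp [applySub_nil]⟩
  | cons x t ih =>
    intro k H
    have hlen1 : 1 < (applySub c11 (x::t) ++ [0]).length := by
      simp only [applySub_cons, List.length_append, List.length_singleton]
      have := c11_len_pos x; omega
    have hx : w1 k = x := by
      have h1 := H 1 hlen1
      have e : (applySub c11 (x::t) ++ [0])[1]'hlen1 = x := by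
        rcases letter_cases x with hx|hx|hx <;> subst hx
        · simp only [applySub_cons, List.append_assoc]
          rw [List.getElem_append_right (by decide)]
          simpa [c11] using c11_head0 t (by simp)
        · simp only [applySub_cons, List.append_assoc]
          rw [List.getElem_append_left (by decide)]
          rfl
        · simp only [applySub_cons, List.append_assoc]
          rw [List.getElem_append_left (by decide)]
          rfl
      rw [← c11_A1 w w1 hshift k, h1, e]
    have hps : phi c11 w1 (k+1) = phi c11 w1 k + (c11 x).length := by
      rw [phi_succ, hx]
    have hlen : (applySub c11 (x::t) ++ [0]).length
        = (c11 x).length + (applySub c11 t ++ [0]).length := by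
      simp [applySub_cons]
    have H' : ∀ j (hj : j < (applySub c11 t ++ [0]).length),
        w (phi c11 w1 (k+1) + j) = (applySub c11 t ++ [0])[j] := by
      intro j hj
      have hj2 : (c11 x).length + j < (applySub c11 (x::t) ++ [0]).length := by omega
      have h2 := H ((c11 x).length + j) hj2
      rw [show phi c11 w1 k + ((c11 x).length + j) = phi c11 w1 (k+1) + j by omega] at h2
      rw [h2]
      simp only [applySub_cons, List.append_assoc]
      rw [List.getElem_append_right (by omega)]
      congr 1
      omega
    obtain ⟨ih1, ih2⟩ := ih (k+1) H'
    refine ⟨?_, ?_⟩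
    · intro j hj
      cases j with
      | zero => simpa using hx
      | succ j =>
        have := ih1 j (by simp at hj; omega)
        rw [show k + (j+1) = (k+1) + j by omega]
        simpa using this
    · rw [List.length_cons, show k + (t.length+1) = (k+1)+t.length by omega, ih2, hps]
      simp [applySub_cons]
      omega

lemma main_c11 (v : Word) :
    ExtSet (applySub c11 v ++ [0]) w = ExtSet v w1 := by
  ext ⟨a, b⟩
  simp only [ExtSet, Set.mem_setOf_eq]
  rw [occ_split, occ_split]
  constructor
  · rintro ⟨i, ha, hu, hb⟩
    have hulen : (applySub c11 v ++ [0]).length = (applySub c11 v).length + 1 := by simp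
    have h0 : w (i+1) = 0 := by
      have h := (hu 0 (by simp)).symm
      rw [c11_head0 v (by simp)] at h
      simpa using h
    obtain ⟨k, hk⟩ := c11_sync w w1 hshift (i+1) h0
    obtain ⟨m, rfl⟩ : ∃ m, k = m + 1 := by
      rcases Nat.eq_zero_or_pos k with h|h
      · subst h; rw [phi_zero] at hk; omega
      · exact ⟨k-1, by omega⟩
    have H : ∀ j (hj : j < (applySub c11 v ++ [0]).length),
        w (phi c11 w1 (m+1) + j) = (applySub c11 v ++ [0])[j] := by
      intro j hj
      rw [← hk]
      exact (hu j hj).symm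
    obtain ⟨hv, hphiL⟩ := c11_decode w w1 hshift v (m+1) H
    refine ⟨m, ?_, ?_, ?_⟩
    · have h2 := c11_A2 w w1 hshift m
      rw [← hk] at h2
      simp only [Nat.add_sub_cancel] at h2
      rw [← h2, ha]
    · exact fun j hj => (hv j hj).symm
    · have hA := c11_A1 w w1 hshift (m+1+v.length)
      rw [hphiL, ← hk] at hA
      rw [← hA, ← hb]
      congr 1
      rw [hulen]
      omega
  · rintro ⟨i, ha, hv, hb⟩
    have hvk : ∀ j (hj : j < v.length), w1 ((i+1) + j) = v[j] := fun j hj => (hv j hj).symm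
    obtain ⟨hw, hphiL⟩ := forward c11 w w1 hshift v (i+1) hvk
    have hge : 1 ≤ phi c11 w1 (i+1) := by
      have := phi_ge c11 w1 c11_len_pos (i+1); omega
    refine ⟨phi c11 w1 (i+1) - 1, ?_, ?_, ?_⟩
    · have h2 := c11_A2 w w1 hshift i
      rw [h2, ha]
    · intro j hj
      simp only [List.length_append, List.length_singleton] at hj
      rw [show phi c11 w1 (i+1) - 1 + 1 + j = phi c11 w1 (i+1) + j by omega]
      rcases Nat.lt_or_ge j (applySub c11 v).length with h | h
      · rw [List.getElem_append_left h]
        exact (hw j h).symm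
      · have hj0 : j = (applySub c11 v).length := by omega
        subst hj0
        rw [List.getElem_append_right (le_refl _)]
        rw [← hphiL]
        have hblk := block c11 w w1 hshift ((i+1)+v.length) 0 (c11_len_pos _)
        rw [c11_head _ (c11_len_pos _)] at hblk
        rw [Nat.add_zero] at hblk
        rw [hblk]
        simp
    · have hA := c11_A1 w w1 hshift ((i+1)+v.length)
      rw [hphiL] at hA
      rw [← hb, ← hA]
      congr 1
      simp
      omega

end

lemma c22_len_pos : ∀ x : Letter, 1 ≤ (c22 x).length := by decide

lemma c22_head (x : Letter) (h : 0 < (c22 x).length) : (c22 x)[0] = x := by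
  fin_cases x <;> rfl

section
variable (w w1 : ℕ → Letter)
  (hshift : ∀ n, IsPrefixOfInf (applySub c22 (pref w1 n)) w)
include hshift

lemma c22_B1 (k : ℕ) : w (phi c22 w1 k) = w1 k := by
  have hb := block c22 w w1 hshift k 0 (c22_len_pos _)
  rw [c22_head _ (c22_len_pos _)] at hb
  simpa using hb

lemma c22_lastw (m : ℕ) : w (phi c22 w1 (m+1) - 1) = 2 := by
  have hb := block c22 w w1 hshift m ((c22 (w1 m)).length - 1)
    (by have := c22_len_pos (w1 m); omega)
  have e1 : phi c22 w1 (m+1) - 1 = phi c22 w1 m + ((c22 (w1 m)).length - 1) := by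
    rw [phi_succ]; have := c22_len_pos (w1 m); omega
  rw [e1, hb]
  rcases letter_cases (w1 m) with h|h|h <;> · simp only [h]; rfl

lemma c22_B2 (k : ℕ) (h2 : 2 ≤ phi c22 w1 (k+1)) :
    w (phi c22 w1 (k+1) - 2) = w1 k := by
  rcases letter_cases (w1 k) with h|h|h
  · have hl : (c22 (w1 k)).length = 2 := by rw [h]; rfl
    have e : phi c22 w1 (k+1) - 2 = phi c22 w1 k := by rw [phi_succ, hl]; omega
    rw [e]
    exact c22_B1 w w1 hshift k
  · have hl : (c22 (w1 k)).length = 2 := by rw [h]; rfl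
    have e : phi c22 w1 (k+1) - 2 = phi c22 w1 k := by rw [phi_succ, hl]; omega
    rw [e]
    exact c22_B1 w w1 hshift k
  · have hl : (c22 (w1 k)).length = 1 := by rw [h]; rfl
    have hp : phi c22 w1 (k+1) = phi c22 w1 k + 1 := by rw [phi_succ, hl]
    have hk1 : 1 ≤ k := by
      rcases Nat.eq_zero_or_pos k with h0|h0
      · exfalso; subst h0; rw [phi_zero] at hp; omega
      · exact h0
    obtain ⟨m, rfl⟩ : ∃ m, k = m + 1 := ⟨k-1, by omega⟩
    have e : phi c22 w1 (m+1+1) - 2 = phi c22 w1 (m+1) - 1 := by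
      have := phi_ge c22 w1 c22_len_pos (m+1)
      omega
    rw [e, c22_lastw w w1 hshift m, h]

lemma c22_sync (p : ℕ) (h : w p = 2) : ∃ k, p + 1 = phi c22 w1 (k+1) := by
  obtain ⟨k, j, hp, hj⟩ := phi_cover c22 w1 c22_len_pos p
  have hb := block c22 w w1 hshift k j hj
  rw [← hp, h] at hb
  have key : ∀ (x : Letter) (j : Fin (c22 x).length),
      (c22 x)[(j:ℕ)]'j.isLt = 2 → (j:ℕ) = (c22 x).length - 1 := by decide
  have hj2 := key (w1 k) ⟨j, hj⟩ hb.symm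
  simp only at hj2
  refine ⟨k, ?_⟩
  rw [phi_succ]
  have := c22_len_pos (w1 k)
  omega

lemma c22_decode : ∀ (v : Word) (k : ℕ),
    (∀ j (hj : j < (applySub c22 v).length),
      w (phi c22 w1 k + j) = (applySub c22 v)[j]) →
    (∀ j (hj : j < v.length), w1 (k + j) = v[j]) ∧
    phi c22 w1 (k + v.length) = phi c22 w1 k + (applySub c22 v).length := by
  intro v
  induction v with
  | nil =>
    intro k _
    exact ⟨by intro j hj; simp at hj, by simp [applySub_nil]⟩
  | cons x t ih =>
    intro k H
    have hlen0 : 0 < (applySub c22 (x::t)).length := by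
      simp only [applySub_cons, List.length_append]
      have := c22_len_pos x; omega
    have hx : w1 k = x := by
      have h1 := H 0 hlen0
      have e : (applySub c22 (x::t))[0]'hlen0 = x := by
        simp only [applySub_cons]
        rw [List.getElem_append_left (c22_len_pos x)]
        exact c22_head x (c22_len_pos x)
      have hB := c22_B1 w w1 hshift k
      rw [← hB]
      rw [show phi c22 w1 k = phi c22 w1 k + 0 by omega, h1, e]
    have hps : phi c22 w1 (k+1) = phi c22 w1 k + (c22 x).length := by
      rw [phi_succ, hx]
    have hlen : (applySub c22 (x::t)).length
        = (c22 x).length + (applySub c22 t).length := by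
      simp [applySub_cons]
    have H' : ∀ j (hj : j < (applySub c22 t).length),
        w (phi c22 w1 (k+1) + j) = (applySub c22 t)[j] := by
      intro j hj
      have hj2 : (c22 x).length + j < (applySub c22 (x::t)).length := by omega
      have h2 := H ((c22 x).length + j) hj2
      rw [show phi c22 w1 k + ((c22 x).length + j) = phi c22 w1 (k+1) + j by omega] at h2
      rw [h2]
      simp only [applySub_cons]
      rw [List.getElem_append_right (by omega)]
      congr 1
      omega
    obtain ⟨ih1, ih2⟩ := ih (k+1) H'
    refine ⟨?_, ?_⟩
    · intro j hj
      cases j with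
      | zero => simpa using hx
      | succ j =>
        have := ih1 j (by simp at hj; omega)
        rw [show k + (j+1) = (k+1) + j by omega]
        simpa using this
    · rw [List.length_cons, show k + (t.length+1) = (k+1)+t.length by omega, ih2, hps]
      simp [applySub_cons]
      omega

lemma main_c22 (h0 : w1 0 ≠ 2) (v : Word) :
    ExtSet ([2] ++ applySub c22 v) w = ExtSet v w1 := by
  ext ⟨a, b⟩
  simp only [ExtSet, Set.mem_setOf_eq]
  rw [occ_split, occ_split]
  constructor
  · rintro ⟨i, ha, hu, hb⟩
    have hulen : ([2] ++ applySub c22 v : Word).length = (applySub c22 v).length + 1 := by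
      simp [Nat.add_comm]
    have h2 : w (i+1) = 2 := by
      have h := (hu 0 (by simp)).symm
      simpa using h
    obtain ⟨k, hk⟩ := c22_sync w w1 hshift (i+1) h2
    -- hk : i + 2 = phi c22 w1 (k+1)
    have hk' : i + 2 = phi c22 w1 (k+1) := by omega
    have H : ∀ j (hj : j < (applySub c22 v).length),
        w (phi c22 w1 (k+1) + j) = (applySub c22 v)[j] := by
      intro j hj
      have hj2 : 1 + j < ([2] ++ applySub c22 v : Word).length := by
        rw [hulen]; omega
      have h3 := (hu (1+j) hj2).symm
      rw [show i + 1 + (1+j) = phi c22 w1 (k+1) + j by omega] at h3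
      rw [h3]
      rw [List.getElem_append_right (by simp)]
      congr 1
      simp
    obtain ⟨hv, hphiL⟩ := c22_decode w w1 hshift v (k+1) H
    refine ⟨k, ?_, ?_, ?_⟩
    · have hB := c22_B2 w w1 hshift k (by omega)
      rw [show phi c22 w1 (k+1) - 2 = i by omega] at hB
      rw [← hB, ha]
    · exact fun j hj => (hv j hj).symm
    · have hB := c22_B1 w w1 hshift (k+1+v.length)
      rw [hphiL] at hB
      rw [← hB, ← hb]
      congr 1
      rw [hulen]
      omega
  · rintro ⟨i, ha, hv, hb⟩
    have hvk : ∀ j (hj : j < v.length), w1 ((i+1) + j) = v[j] := fun j hj => (hv j hj).symm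
    obtain ⟨hw, hphiL⟩ := forward c22 w w1 hshift v (i+1) hvk
    have hge2 : 2 ≤ phi c22 w1 (i+1) := by
      rcases Nat.eq_zero_or_pos i with hi0 | hi0
      · subst hi0
        have hl : (c22 (w1 0)).length = 2 := by
          rcases letter_cases (w1 0) with h|h|h
          · rw [h]; rfl
          · rw [h]; rfl
          · exact absurd h h0
        rw [show (1:ℕ) = 0 + 1 from rfl, phi_succ, phi_zero, hl]
      · have := phi_ge c22 w1 c22_len_pos (i+1); omega
    refine ⟨phi c22 w1 (i+1) - 2, ?_, ?_, ?_⟩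
    · have hB := c22_B2 w w1 hshift i hge2
      rw [hB, ha]
    · intro j hj
      simp only [List.length_append, List.length_singleton] at hj
      cases j with
      | zero =>
        rw [List.getElem_append_left (by simp)]
        rw [show phi c22 w1 (i+1) - 2 + 1 + 0 = phi c22 w1 (i+1) - 1 by omega]
        rw [c22_lastw w w1 hshift i]
        rfl
      | succ j =>
        rw [List.getElem_append_right (by simp only [List.length_singleton]; omega)]
        have hjv : j < (applySub c22 v).length := by omega
        have := hw j hjv
        rw [show phi c22 w1 (i+1) - 2 + 1 + (j+1) = phi c22 w1 (i+1) + j by omega]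
        rw [this]
        congr 1
    · have hB := c22_B1 w w1 hshift (i+1+v.length)
      rw [hphiL] at hB
      rw [show phi c22 w1 (i+1) - 2 + 1 + ([2] ++ applySub c22 v : Word).length
        = phi c22 w1 (i+1) + (applySub c22 v).length by simp; omega]
      rw [hB]
      exact hb

end

lemma mem_Cprime_iff (σ : Letter → Word) : σ ∈ Cprime ↔
    σ = c11 ∨ σ = c22 ∨ σ = c122 ∨ σ = c211 ∨ σ = c121 ∨ σ = c212 := by
  simp [Cprime, Set.mem_insert_iff, Set.mem_singleton_iff]

lemma mem_Cprime_ne_nil (σ : Letter → Word) (h : σ ∈ Cprime) (y : Letter) : σ y ≠ [] := by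
  rw [mem_Cprime_iff] at h
  rcases h with rfl|rfl|rfl|rfl|rfl|rfl <;> revert y <;> decide

lemma comps_succ (τ : ℕ → Letter → Word) (r n : ℕ) (z : Word) :
    comps τ r (n+1) z = applySub (τ r) (comps τ (r+1) n z) := rfl

lemma comps_ne_nil (τ : ℕ → Letter → Word) (hτ : ∀ n, τ n ∈ Cprime) :
    ∀ (n r : ℕ) (x : Letter), comps τ r n [x] ≠ [] := by
  intro n
  induction n with
  | zero => intro r x; simp [comps]
  | succ n ih =>
    intro r x
    rw [comps_succ]
    cases e : comps τ (r+1) n [x] with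
    | nil => exact absurd e (ih (r+1) x)
    | cons y t =>
      rw [applySub_cons]
      have := mem_Cprime_ne_nil (τ r) (hτ r) y
      intro hcon
      rw [List.append_eq_nil_iff] at hcon
      exact this hcon.1

lemma comps_two (τ : ℕ → Letter → Word) (hτ : ∀ n, τ n ∈ Cprime) :
    ∀ (n r : ℕ) (x : Letter), (comps τ r n [x]).head? = some 2 →
      comps τ r n [x] = [2] := by
  intro n
  induction n with
  | zero =>
    intro r x h
    simp [comps] at h
    simp [comps, h]
  | succ n ih =>
    intro r x h
    cases e : comps τ (r+1) n [x] with
    | nil => exact absurd e (comps_ne_nil τ hτ n (r+1) x)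
    | cons y t =>
      have hcs : comps τ r (n+1) [x] = applySub (τ r) (y :: t) := by
        rw [comps_succ, e]
      rw [hcs] at h ⊢
      rw [applySub_cons] at h ⊢
      have hne := mem_Cprime_ne_nil (τ r) (hτ r) y
      have hhd : (τ r y).head? = some 2 := by
        cases e2 : τ r y with
        | nil => exact absurd e2 hne
        | cons z s => rw [e2] at h; simpa using (by simpa [e2] using h : z = 2) ▸ rfl
      have key : ∀ σ : Letter → Word,
          (σ = c11 ∨ σ = c22 ∨ σ = c122 ∨ σ = c211 ∨ σ = c121 ∨ σ = c212) →
          ∀ y : Letter, (σ y).head? = some 2 → y = 2 ∧ σ 2 = [2] := by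
        rintro σ (rfl|rfl|rfl|rfl|rfl|rfl) <;> decide
      obtain ⟨hy2, hσ2⟩ := key (τ r) ((mem_Cprime_iff _).mp (hτ r)) y hhd
      subst hy2
      have ht : (2:Letter) :: t = [2] := by
        rw [← e]
        exact ih (r+1) x (by rw [e]; rfl)
      have ht' : t = [] := by simpa using ht
      subst ht'
      rw [applySub_nil, hσ2]
      rfl

lemma w1_ne2 (w1 : ℕ → Letter) (τ : ℕ → Letter → Word) (a : ℕ → Letter)
    (hτ : ∀ n, τ n ∈ Cprime)
    (hpref1 : ∀ n, IsPrefixOfInf (comps τ 0 n [a n]) w1)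
    (hlen1 : Filter.Tendsto (fun n => (comps τ 0 n [a n]).length)
      Filter.atTop Filter.atTop) : w1 0 ≠ 2 := by
  intro h2
  obtain ⟨N, hN⟩ := (hlen1.eventually (Filter.eventually_ge_atTop 2)).exists
  have hnn := comps_ne_nil τ hτ N 0 (a N)
  have h0 : 0 < (comps τ 0 N [a N]).length := List.length_pos_iff.mpr hnn
  have hg := hpref1 N 0 h0
  rw [h2] at hg
  have hhd : (comps τ 0 N [a N]).head? = some 2 := by
    rw [List.head?_eq_getElem?, List.getElem?_eq_getElem h0, hg]
  have he := comps_two τ hτ N 0 (a N) hhd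
  rw [he] at hN
  simp at hN

theorem stmt14 (w w1 : ℕ → Letter) (τ : ℕ → Letter → Word) (a : ℕ → Letter)
    (hτ : ∀ n, τ n ∈ Cprime) (hτ0 : τ 0 = c11 ∨ τ 0 = c22)
    (hpref : ∀ n, IsPrefixOfInf (comps τ 0 n [a n]) w)
    (hlen : Filter.Tendsto (fun n => (comps τ 0 n [a n]).length)
      Filter.atTop Filter.atTop)
    (hpref1 : ∀ n, IsPrefixOfInf (comps (fun k => τ (k + 1)) 0 n [a (n + 1)]) w1)
    (hlen1 : Filter.Tendsto (fun n => (comps (fun k => τ (k + 1)) 0 n [a (n + 1)]).length)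
      Filter.atTop Filter.atTop)
    (hshift : ∀ n : ℕ,
      IsPrefixOfInf (applySub (τ 0) (List.ofFn (fun i : Fin n => w1 i))) w)
    (u : Word) (hune : u ≠ []) (hufac : FactorOf u w) (hubis : Bispecial u w)
    (v : Word) (hvfac : FactorOf v w1) (hvbis : Bispecial v w1)
    (hdec1 : τ 0 = c11 → u = applySub (τ 0) v ++ [0])
    (hdec2 : τ 0 = c22 → u = [2] ++ applySub (τ 0) v) :
    ExtSet u w = ExtSet v w1 := by
  rcases hτ0 with h | h
  · have hs : ∀ n, IsPrefixOfInf (applySub c11 (pref w1 n)) w := by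
      intro n; have := hshift n; rw [h] at this; exact this
    rw [hdec1 h, h]
    exact main_c11 w w1 hs v
  · have hs : ∀ n, IsPrefixOfInf (applySub c22 (pref w1 n)) w := by
      intro n; have := hshift n; rw [h] at this; exact this
    have h0 : w1 0 ≠ 2 :=
      w1_ne2 w1 (fun k => τ (k + 1)) (fun n => a (n + 1)) (fun n => hτ (n + 1))
        hpref1 hlen1
    rw [hdec2 h, h]
    exact main_c22 w w1 hs h0 v
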